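/- arXiv:1605.02858 — 2 statements merged into one kernel-verified Lean document; each statement's English description precedes it below -/
import Mathlib

section
/- There exist a neighborhood U of 0 in ℂ and a constant C > 0 such that for all z ∈ U, |φ₁(z) − (1 + z/6)/(1 − z/3)| ≤ C|z|³. -/
noncomputable def phi1 (z : ℂ) : ℂ := if z = 0 then 1 else (Complex.exp z - 1) / z

theorem phi1_pade_order3 :
    ∃ U ∈ nhds (0 : ℂ), ∃ C : ℝ, 0 < C ∧
      ∀ z ∈ U, ‖phi1 z - (1 + z / 6) / (1 - z / 3)‖ ≤ C * ‖z‖ ^ 3 := by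
  refine ⟨Metric.ball 0 (1/2), Metric.ball_mem_nhds _ (by norm_num), 1, one_pos, ?_⟩
  intro z hz
  rw [Metric.mem_ball, dist_zero_right] at hz
  by_cases h0 : z = 0
  · simp [phi1, h0]
  have habs1 : ‖z‖ ≤ 1 := by linarith
  have h3 : ‖z/3‖ ≤ 1/6 := by
    rw [norm_div]; simp only [Complex.norm_ofNat]; linarith
  have hd : (5:ℝ)/6 ≤ ‖1 - z/3‖ := by
    have h := norm_sub_norm_le (1 : ℂ) (z/3)
    simp only [norm_one] at h
    linarith
  have hdne : (1 - z/3) ≠ 0 := by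
    intro h; rw [h] at hd; simp at hd; linarith
  set w := Complex.exp z - (1 + z + z^2/2 + z^3/6) with hw
  have hwb : ‖w‖ ≤ ‖z‖ ^ 4 * (5/96) := by
    have hb := Complex.exp_bound habs1 (n := 4) (by norm_num)
    have hsum : ∑ m ∈ Finset.range 4, z ^ m / m.factorial = 1 + z + z^2/2 + z^3/6 := by
      simp [Finset.sum_range_succ, Nat.factorial]
    rw [hsum] at hb
    convert hb using 2
    norm_num [Nat.factorial]
  have key : phi1 z - (1 + z/6)/(1 - z/3) = (-z^4/18 + w*(1 - z/3)) / (z*(1 - z/3)) := by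
    rw [phi1, if_neg h0, div_sub_div _ _ h0 hdne]
    congr 1
    rw [hw]; ring
  rw [key, norm_div]
  have hden : ‖z‖ * (5/6) ≤ ‖z * (1 - z/3)‖ := by
    rw [norm_mul]
    have hzpos : 0 < ‖z‖ := norm_pos_iff.mpr h0
    nlinarith
  have hub : ‖1 - z/3‖ ≤ 7/6 := by
    have h := norm_sub_le (1 : ℂ) (z/3)
    simp only [norm_one] at h
    linarith
  have hnum : ‖-z^4/18 + w*(1 - z/3)‖ ≤ ‖z‖ ^ 4 * (1/18 + 5/96 * (7/6)) := by
    calc ‖-z^4/18 + w*(1 - z/3)‖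
        ≤ ‖-z^4/18‖ + ‖w*(1 - z/3)‖ := norm_add_le _ _
      _ ≤ ‖z‖ ^ 4 / 18 + (‖z‖ ^ 4 * (5/96)) * (7/6) := by
          rw [norm_div, norm_mul, norm_neg, norm_pow]
          gcongr
          norm_num
      _ = ‖z‖ ^ 4 * (1/18 + 5/96 * (7/6)) := by ring
  have hzpos : 0 < ‖z‖ := norm_pos_iff.mpr h0
  have hdpos : 0 < ‖z * (1 - z/3)‖ := norm_pos_iff.mpr (mul_ne_zero h0 hdne)
  rw [div_le_iff₀ hdpos]
  calc ‖-z^4/18 + w*(1 - z/3)‖ ≤ ‖z‖ ^ 4 * (1/18 + 5/96 * (7/6)) := hnum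
    _ ≤ 1 * ‖z‖ ^ 3 * (‖z‖ * (5/6)) := by nlinarith [pow_pos hzpos 3, pow_pos hzpos 4]
    _ ≤ 1 * ‖z‖ ^ 3 * ‖z * (1 - z/3)‖ := by gcongr
end

section
/- Let J and L be n×n complex matrices with J = L + B. Then φ₂(hJ) − φ₂(hL) = h ∫₀¹∫₀¹ e^{(1−s)(1−θ)hL} θ(1−θ) B e^{s(1−θ)hJ} ds dθ for all h > 0, where φ₂(z) = ∫₀¹ e^{(1−θ)z} θ dθ (matrix version). -/
open NormedSpace

set_option synthInstance.maxHeartbeats 1000000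
set_option maxHeartbeats 2000000

/-- `φ₂(A) = ∫₀¹ θ e^{(1-θ)A} dθ` for an operator `A`. -/
noncomputable def phi2Op {n : ℕ}
    (A : EuclideanSpace ℂ (Fin n) →L[ℂ] EuclideanSpace ℂ (Fin n)) :
    EuclideanSpace ℂ (Fin n) →L[ℂ] EuclideanSpace ℂ (Fin n) :=
  ∫ θ in (0:ℝ)..1, θ • exp ((1 - θ) • A)

section Aux

variable {n : ℕ}

local notation "CLM" => EuclideanSpace ℂ (Fin n) →L[ℂ] EuclideanSpace ℂ (Fin n)

instance : IsScalarTower ℝ CLM CLM :=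
  ⟨fun r x y => ContinuousLinearMap.smul_comp r x y⟩

instance : SMulCommClass ℝ CLM CLM :=
  ⟨fun r x y => by
    simp only [smul_eq_mul]
    refine ContinuousLinearMap.ext fun v => ?_
    change r • x (y v) = x (r • y v)
    exact (x.map_smul_of_tower r (y v)).symm⟩

lemma hasDerivAt_expC (A : CLM) (t : ℝ) :
    HasDerivAt (fun u : ℝ => exp (u • A)) (exp (t • A) * A) t := by
  exact hasDerivAt_exp_smul_const A t

lemma hasDerivAt_expC' (A : CLM) (t : ℝ) :
    HasDerivAt (fun u : ℝ => exp (u • A)) (A * exp (t • A)) t := by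
  exact hasDerivAt_exp_smul_const' A t

lemma contExpC (A : CLM) (f : ℝ → ℝ) (hf : Continuous f) :
    Continuous fun s : ℝ => exp (f s • A) :=
  (continuous_iff_continuousAt.2 fun t => (hasDerivAt_expC A t).continuousAt).comp hf

lemma duhamel (J L B : CLM) (hJ : J = L + B) (a : ℝ) :
    exp (a • J) - exp (a • L) =
      a • ∫ s in (0:ℝ)..1, exp (((1 - s) * a) • L) * B * exp ((s * a) • J) := by
  have key : ∀ s : ℝ, HasDerivAt
      (fun s : ℝ => exp (((1 - s) * a) • L) * exp ((s * a) • J))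
      (a • (exp (((1 - s) * a) • L) * B * exp ((s * a) • J))) s := by
    intro s
    have hg1 : HasDerivAt (fun s : ℝ => (1 - s) * a) (-a) s := by
      simpa using ((hasDerivAt_id s).const_sub 1).mul_const a
    have hg2 : HasDerivAt (fun s : ℝ => s * a) a s := by
      simpa using (hasDerivAt_id s).mul_const a
    have h1 : HasDerivAt (fun s : ℝ => exp (((1 - s) * a) • L))
        ((-a) • (exp (((1 - s) * a) • L) * L)) s :=
      by have := (hasDerivAt_expC L ((1 - s) * a)).scomp s hg1; exact this
    have h2 : HasDerivAt (fun s : ℝ => exp ((s * a) • J))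
        (a • (J * exp ((s * a) • J))) s :=
      by have := (hasDerivAt_expC' J (s * a)).scomp s hg2; exact this
    have := h1.mul h2
    refine this.congr_deriv ?_
    have hB : B = J - L := by rw [hJ]; abel
    rw [hB]
    simp only [mul_sub, sub_mul, smul_sub, neg_smul, smul_mul_assoc, mul_smul_comm, mul_assoc]
    module
  have cont : Continuous fun s : ℝ =>
      a • (exp (((1 - s) * a) • L) * B * exp ((s * a) • J)) := by
    exact (((contExpC L _ (by fun_prop)).mul continuous_const).mul
      (contExpC J _ (by fun_prop))).const_smul a
  have := intervalIntegral.integral_eq_sub_of_hasDerivAt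
    (fun s _ => key s) (cont.intervalIntegrable 0 1)
  rw [intervalIntegral.integral_smul] at this
  rw [this]
  have z : ∀ A : CLM, (0 : ℝ) • A = 0 := fun A => by
    refine ContinuousLinearMap.ext fun v => ?_
    simp
  simp only [sub_self, sub_zero, zero_mul, one_mul, mul_one, z, exp_zero]

lemma duhamel' (J L B : CLM) (hJ : J = L + B) (θ h : ℝ) :
    exp (((1 - θ) * h) • J) - exp (((1 - θ) * h) • L) =
      ((1 - θ) * h) • ∫ s in (0:ℝ)..1,
        exp (((1 - s) * (1 - θ) * h) • L) * B * exp ((s * (1 - θ) * h) • J) := by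
  simpa [mul_assoc] using duhamel J L B hJ ((1 - θ) * h)

end Aux

theorem phi2_difference_formula (n : ℕ)
    (J L B : EuclideanSpace ℂ (Fin n) →L[ℂ] EuclideanSpace ℂ (Fin n))
    (hJ : J = L + B) (h : ℝ) (hh : 0 < h) :
    phi2Op (h • J) - phi2Op (h • L) =
      h • ∫ θ in (0:ℝ)..1, ∫ s in (0:ℝ)..1,
        (θ * (1 - θ)) •
          (exp (((1 - s) * (1 - θ) * h) • L) * B * exp ((s * (1 - θ) * h) • J)) := by
  have point : ∀ θ : ℝ,
      θ • exp ((1 - θ) • (h • J)) - θ • exp ((1 - θ) • (h • L)) =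
      h • ∫ s in (0:ℝ)..1, (θ * (1 - θ)) •
        (exp (((1 - s) * (1 - θ) * h) • L) * B * exp ((s * (1 - θ) * h) • J)) := by
    intro θ
    rw [smul_smul, smul_smul]
    have e1 : θ • exp (((1 - θ) * h) • J) - θ • exp (((1 - θ) * h) • L)
        = θ • (exp (((1 - θ) * h) • J) - exp (((1 - θ) * h) • L)) := by
      refine ContinuousLinearMap.ext fun v => ?_
      simp [smul_sub]
    rw [e1, duhamel' J L B hJ θ h, smul_smul, intervalIntegral.integral_smul, smul_smul]
    congr 1
    ring
  have int1 : IntervalIntegrable (fun θ : ℝ => θ • exp ((1 - θ) • (h • J))) MeasureTheory.volume 0 1 :=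
    (continuous_id.smul (contExpC (h • J) _ (by fun_prop))).intervalIntegrable 0 1
  have int2 : IntervalIntegrable (fun θ : ℝ => θ • exp ((1 - θ) • (h • L))) MeasureTheory.volume 0 1 :=
    (continuous_id.smul (contExpC (h • L) _ (by fun_prop))).intervalIntegrable 0 1
  unfold phi2Op
  rw [← intervalIntegral.integral_sub int1 int2, ← intervalIntegral.integral_smul]
  exact intervalIntegral.integral_congr fun θ _ => point θ
end
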